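/- There exists ε > 0 such that for every complex u with |u| < ε the family (w(p)·u^{l(p)})_{p} indexed by the prime cycles p of X is absolutely summable, and the infinite product Π_p (1 − w(p)u^{l(p)}) over all prime cycles converges (is multipliable) with nonzero value. -/

import Mathlib

/- Formalization of a statement from "Ihara Zeta functions of infinite weighted graphs"
   (A. Deitmar).  Context: `X` is a connected graph of bounded valency, `w` is a positive
   weight function on oriented edges (darts) with finite total weight. -/

open scoped BigOperators
open SimpleGraph

attribute [local instance 10] Classical.propDecidable
noncomputable local instance (priority := 10) {α : Type*} : DecidableEq α := Classical.decEq _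

variable {V : Type*}

/-- The standard basis vector of `ℓ²(ι)` at `i`. -/
noncomputable def bv {ι : Type*} (i : ι) : lp (fun _ : ι => ℂ) 2 := lp.single 2 i 1

/-- For adjacent vertices `x, y`, `dartW G w h = w(x,y)·w(y,x)`, the weight `W(x,y)` of the
underlying edge. -/
noncomputable def dartW (G : SimpleGraph V) (w : G.Dart → ℝ) {x y : V} (h : G.Adj x y) : ℝ :=
  w ⟨(x, y), h⟩ * w ⟨(y, x), h.symm⟩

/-- Two cyclically indexed paths are equivalent iff they differ by a cyclic shift. -/
def shiftSetoid (n : ℕ) (P : (ZMod n → V) → Prop) : Setoid {f : ZMod n → V // P f} where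
  r p q := ∃ k : ZMod n, ∀ i, q.1 i = p.1 (i + k)
  iseqv := by
    refine ⟨fun p => ⟨0, fun i => by rw [add_zero]⟩, ?_, ?_⟩
    · rintro p q ⟨k, h⟩
      refine ⟨-k, fun i => ?_⟩
      rw [h (i + -k)]
      ring_nf
    · rintro p q r ⟨k, h⟩ ⟨k', h'⟩
      refine ⟨k + k', fun i => ?_⟩
      rw [h' i, h (i + k')]
      ring_nf

/-- The weight of a closed path, encoded as a function `ZMod n → V` (the vertices visited,
cyclically): the product of the weights of the traversed oriented edges. -/
noncomputable def cycW (G : SimpleGraph V) (w : G.Dart → ℝ) (n : ℕ) [NeZero n]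
    (f : ZMod n → V) (h : ∀ i, G.Adj (f i) (f (i + 1))) : ℝ :=
  ∏ i : ZMod n, w ⟨(f i, f (i + 1)), h i⟩

/-- The weight descends to shift-equivalence classes (cycles). -/
noncomputable def liftWgt {G : SimpleGraph V} (w : G.Dart → ℝ) (n : ℕ) [NeZero n]
    (P : (ZMod n → V) → Prop) (hP : ∀ f, P f → ∀ i, G.Adj (f i) (f (i + 1))) :
    Quotient (shiftSetoid (V := V) n P) → ℝ :=
  Quotient.lift (fun p => cycW G w n p.1 (hP p.1 p.2)) (by
    rintro p q ⟨k, h⟩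
    unfold cycW
    refine (Fintype.prod_equiv (Equiv.addRight k) _ _ (fun i => ?_)).symm
    have h1 : q.1 i = p.1 ((Equiv.addRight k) i) := h i
    have h2 : q.1 (i + 1) = p.1 ((Equiv.addRight k) i + 1) := by
      rw [h (i + 1)]
      show p.1 (i + 1 + k) = p.1 (i + k + 1)
      ring_nf
    congr 1
    exact SimpleGraph.Dart.ext _ _ (Prod.ext h1 h2))

/-- A closed path without backtracking and without tail: encoded cyclically, saying that
the cyclic sequence is adjacent in every step and `f (i-1) ≠ f (i+1)` for every `i`
(at `i = 0` this is exactly the no-tail condition). -/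
def ClosedRedP (G : SimpleGraph V) (n : ℕ) (f : ZMod n → V) : Prop :=
  (∀ i, G.Adj (f i) (f (i + 1))) ∧ ∀ i, f (i - 1) ≠ f (i + 1)

/-- A cyclically indexed closed path is primitive iff it is not a power of a shorter one. -/
def IsPrimitive (n : ℕ) (f : ZMod n → V) : Prop :=
  ¬ ∃ d : ℕ, 0 < d ∧ d < n ∧ d ∣ n ∧ ∀ i, f (i + (d : ZMod n)) = f i

/-- Predicate for prime cycles: closed, reduced, without tail, and primitive. -/
def PrimeP (G : SimpleGraph V) (n : ℕ) (f : ZMod n → V) : Prop :=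
  ClosedRedP G n f ∧ IsPrimitive n f

/-- The type of prime cycles of length `n`. -/
def PrimeCycles (G : SimpleGraph V) (n : ℕ) : Type _ :=
  Quotient (shiftSetoid (V := V) n (PrimeP G n))

/-- The index type of all prime cycles of `X`. -/
def PrimeIdx (G : SimpleGraph V) : Type _ :=
  Σ n : {n : ℕ // 0 < n}, PrimeCycles G n.1

/-- The length of a prime cycle. -/
def PrimeIdx.len {G : SimpleGraph V} (p : PrimeIdx G) : ℕ := p.1.1

/-- The weight of a prime cycle. -/
noncomputable def PrimeIdx.wgt {G : SimpleGraph V} (w : G.Dart → ℝ) (p : PrimeIdx G) : ℝ :=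
  haveI : NeZero p.1.1 := ⟨p.1.2.ne'⟩
  liftWgt w p.1.1 (PrimeP G p.1.1) (fun _ hf => hf.1.1) p.2

/-- The darts of the chosen representative of a cycle. -/
noncomputable def repD {G : SimpleGraph V} (n : ℕ) [NeZero n] (q : PrimeCycles G n)
    (i : ZMod n) : G.Dart :=
  ⟨((Quotient.out q).1 i, (Quotient.out q).1 (i + 1)), (Quotient.out q).2.1.1 i⟩

lemma repD_injective {G : SimpleGraph V} (n : ℕ) [NeZero n] :
    Function.Injective (repD (G := G) n) := by
  intro q q' h
  have h1 : ∀ i, (Quotient.out q).1 i = (Quotient.out q').1 i := fun i =>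
    congrArg (fun d : G.Dart => d.toProd.1) (congrFun h i)
  exact Quotient.out_injective (Subtype.ext (funext h1))

lemma liftWgt_out {G : SimpleGraph V} (w : G.Dart → ℝ) (n : ℕ) [NeZero n]
    (q : PrimeCycles G n) :
    liftWgt w n (PrimeP G n) (fun _ hf => hf.1.1) q = ∏ i : ZMod n, w (repD n q i) := by
  conv_lhs => rw [← Quotient.out_eq q]
  rfl

lemma prime_sum_bound {G : SimpleGraph V} (w : G.Dart → ℝ) (hw : ∀ e, 0 < w e)
    (hsum : Summable w) (n : ℕ) [NeZero n] (S : Finset (PrimeCycles G n)) :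
    ∑ q ∈ S, liftWgt w n (PrimeP G n) (fun _ hf => hf.1.1) q ≤ (∑' e, w e) ^ n := by
  calc ∑ q ∈ S, liftWgt w n (PrimeP G n) (fun _ hf => hf.1.1) q
      = ∑ q ∈ S, ∏ i : ZMod n, w (repD n q i) := by
        exact Finset.sum_congr rfl fun q _ => liftWgt_out w n q
    _ = ∑ g ∈ S.image (repD n), ∏ i : ZMod n, w (g i) := by
        rw [Finset.sum_image (fun a _ b _ h => repD_injective n h)]
    _ ≤ ∑ g ∈ Fintype.piFinset (fun i : ZMod n => (S.image (repD n)).image (fun g => g i)),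
          ∏ i : ZMod n, w (g i) := by
        apply Finset.sum_le_sum_of_subset_of_nonneg
        · intro g hg
          rw [Fintype.mem_piFinset]
          exact fun i => Finset.mem_image_of_mem _ hg
        · exact fun g _ _ => Finset.prod_nonneg fun i _ => (hw _).le
    _ = ∏ i : ZMod n, ∑ e ∈ (S.image (repD n)).image (fun g => g i), w e :=
        (Finset.prod_univ_sum _ _).symm
    _ ≤ ∏ _i : ZMod n, (∑' e, w e) := by
        refine Finset.prod_le_prod (fun i _ => Finset.sum_nonneg fun e _ => (hw e).le)
          (fun i _ => hsum.sum_le_tsum _ (fun e _ => (hw e).le))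
    _ = (∑' e, w e) ^ n := by rw [Finset.prod_const, Finset.card_univ, ZMod.card]

/-- For `|u|` small, the family `(w(p)u^{l(p)})_p` over prime cycles is
absolutely summable and the Euler product `Π_p (1 − w(p)u^{l(p)})` converges with nonzero
value. -/
theorem statement_2 (G : SimpleGraph V) (hconn : G.Connected)
    (M : ℝ) (hM : 0 < M)
    (hval : ∀ x : V, (G.neighborSet x).Finite ∧ ((G.neighborSet x).ncard : ℝ) ≤ M)
    (w : G.Dart → ℝ) (hw : ∀ e, 0 < w e) (hsum : Summable w) :
    ∃ ε > (0 : ℝ), ∀ u : ℂ, ‖u‖ < ε →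
      Summable (fun p : PrimeIdx G => ‖(PrimeIdx.wgt w p : ℂ) * u ^ PrimeIdx.len p‖) ∧
      Multipliable (fun p : PrimeIdx G => 1 - (PrimeIdx.wgt w p : ℂ) * u ^ PrimeIdx.len p) ∧
      ∏' p : PrimeIdx G, (1 - (PrimeIdx.wgt w p : ℂ) * u ^ PrimeIdx.len p) ≠ 0 := by
  classical
  set W := ∑' e, w e with hWdef
  have hW0 : 0 ≤ W := tsum_nonneg fun e => (hw e).le
  have hWpos : (0:ℝ) < 2 * (W + 1) := by positivity
  refine ⟨(2 * (W + 1))⁻¹, by positivity, fun u hu => ?_⟩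
  have h1 : ‖u‖ * (2 * (W + 1)) < 1 := by
    have := mul_lt_mul_of_pos_right hu hWpos
    rwa [inv_mul_cancel₀ hWpos.ne'] at this
  have hkey : W * ‖u‖ ≤ 1 / 2 := by nlinarith [norm_nonneg u, hW0]
  have hWnn : 0 ≤ W * ‖u‖ := mul_nonneg hW0 (norm_nonneg u)
  -- basic facts about weights
  have hwnn : ∀ p : PrimeIdx G, 0 ≤ PrimeIdx.wgt w p := by
    rintro ⟨⟨n, hn⟩, q⟩
    haveI : NeZero n := ⟨hn.ne'⟩
    show 0 ≤ liftWgt w n (PrimeP G n) (fun _ hf => hf.1.1) q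
    rw [liftWgt_out]
    exact Finset.prod_nonneg fun i _ => (hw _).le
  have hwle : ∀ p : PrimeIdx G, PrimeIdx.wgt w p ≤ W ^ p.len := by
    rintro ⟨⟨n, hn⟩, q⟩
    haveI : NeZero n := ⟨hn.ne'⟩
    have h := prime_sum_bound w hw hsum n {q}
    exact (Finset.sum_singleton _ _).symm.trans_le h
  have hnorm : ∀ p : PrimeIdx G, ‖(PrimeIdx.wgt w p : ℂ) * u ^ PrimeIdx.len p‖
      = PrimeIdx.wgt w p * ‖u‖ ^ PrimeIdx.len p := by
    intro p
    rw [norm_mul, norm_pow, Complex.norm_real, Real.norm_of_nonneg (hwnn p)]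
  have hterm : ∀ p : PrimeIdx G, ‖(PrimeIdx.wgt w p : ℂ) * u ^ PrimeIdx.len p‖ ≤ 1 / 2 := by
    intro p
    rw [hnorm p]
    calc PrimeIdx.wgt w p * ‖u‖ ^ p.len ≤ W ^ p.len * ‖u‖ ^ p.len :=
          mul_le_mul_of_nonneg_right (hwle p) (pow_nonneg (norm_nonneg u) _)
      _ = (W * ‖u‖) ^ p.len := (mul_pow _ _ _).symm
      _ ≤ (1 / 2) ^ p.len := pow_le_pow_left₀ hWnn hkey _
      _ ≤ (1 / 2) ^ 1 := pow_le_pow_of_le_one (by norm_num) (by norm_num) p.1.2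
      _ = 1 / 2 := pow_one _
  -- fiberwise summability
  have hfib : ∀ i : {n : ℕ // 0 < n},
      Summable (fun q : PrimeCycles G i.1 =>
        ‖(PrimeIdx.wgt w ⟨i, q⟩ : ℂ) * u ^ PrimeIdx.len ⟨i, q⟩‖) ∧
      ∑' q : PrimeCycles G i.1,
        ‖(PrimeIdx.wgt w ⟨i, q⟩ : ℂ) * u ^ PrimeIdx.len ⟨i, q⟩‖ ≤ (W * ‖u‖) ^ i.1 := by
    rintro ⟨n, hn⟩
    haveI : NeZero n := ⟨hn.ne'⟩
    have heq : ∀ q : PrimeCycles G n,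
        ‖(PrimeIdx.wgt w ⟨⟨n, hn⟩, q⟩ : ℂ) * u ^ PrimeIdx.len ⟨⟨n, hn⟩, q⟩‖
          = liftWgt w n (PrimeP G n) (fun _ hf => hf.1.1) q * ‖u‖ ^ n :=
      fun q => hnorm ⟨⟨n, hn⟩, q⟩
    have hbd : ∀ S : Finset (PrimeCycles G n),
        ∑ q ∈ S, liftWgt w n (PrimeP G n) (fun _ hf => hf.1.1) q * ‖u‖ ^ n
          ≤ W ^ n * ‖u‖ ^ n := by
      intro S
      refine (Finset.sum_mul S _ _).symm.trans_le ?_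
      exact mul_le_mul_of_nonneg_right (prime_sum_bound w hw hsum n S)
        (pow_nonneg (norm_nonneg u) _)
    have hs : Summable (fun q : PrimeCycles G n =>
        liftWgt w n (PrimeP G n) (fun _ hf => hf.1.1) q * ‖u‖ ^ n) := by
      apply summable_of_sum_le (c := W ^ n * ‖u‖ ^ n) ?_ hbd
      intro q
      exact mul_nonneg (hwnn ⟨⟨n, hn⟩, q⟩) (pow_nonneg (norm_nonneg u) _)
    constructor
    · exact hs.congr fun q => (heq q).symm
    · calc ∑' q : PrimeCycles G n,
          ‖(PrimeIdx.wgt w ⟨⟨n, hn⟩, q⟩ : ℂ) * u ^ PrimeIdx.len ⟨⟨n, hn⟩, q⟩‖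
          = ∑' q : PrimeCycles G n,
              liftWgt w n (PrimeP G n) (fun _ hf => hf.1.1) q * ‖u‖ ^ n :=
            tsum_congr heq
        _ ≤ W ^ n * ‖u‖ ^ n := hs.tsum_le_of_sum_le hbd
        _ = (W * ‖u‖) ^ n := (mul_pow _ _ _).symm
  -- full summability
  have hS : Summable (fun p : PrimeIdx G =>
      ‖(PrimeIdx.wgt w p : ℂ) * u ^ PrimeIdx.len p‖) := by
    refine (summable_sigma_of_nonneg fun p => norm_nonneg _).mpr ⟨fun i => (hfib i).1, ?_⟩
    have hg : Summable (fun i : {n : ℕ // 0 < n} => (1 / 2 : ℝ) ^ (i : ℕ)) :=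
      (summable_geometric_of_lt_one (by norm_num) (by norm_num)).subtype _
    refine Summable.of_nonneg_of_le (fun i => tsum_nonneg fun q => norm_nonneg _)
      (fun i => le_trans (hfib i).2 ?_) hg
    exact pow_le_pow_left₀ hWnn hkey _
  -- log-summability and nonvanishing of factors
  have hne : ∀ p : PrimeIdx G,
      (1 : ℂ) - (PrimeIdx.wgt w p : ℂ) * u ^ PrimeIdx.len p ≠ 0 := by
    intro p h
    have h2 : (PrimeIdx.wgt w p : ℂ) * u ^ PrimeIdx.len p = 1 := by
      have := sub_eq_zero.mp h
      exact this.symm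
    have := hterm p
    rw [h2] at this
    norm_num at this
  have hlog : Summable (fun p : PrimeIdx G =>
      Complex.log (1 - (PrimeIdx.wgt w p : ℂ) * u ^ PrimeIdx.len p)) := by
    apply Summable.of_norm_bounded (hS.mul_left (3 / 2))
    intro p
    have h1 : ‖-((PrimeIdx.wgt w p : ℂ) * u ^ PrimeIdx.len p)‖ ≤ 1 / 2 := by
      rw [norm_neg]; exact hterm p
    have := Complex.norm_log_one_add_half_le_self h1
    rw [norm_neg] at this
    simpa [sub_eq_add_neg] using this
  have hmult : Multipliable (fun p : PrimeIdx G =>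
      (1 : ℂ) - (PrimeIdx.wgt w p : ℂ) * u ^ PrimeIdx.len p) :=
    Complex.multipliable_of_summable_log hlog
  have hprod := Complex.cexp_tsum_eq_tprod hne hlog
  refine ⟨hS, hmult, ?_⟩
  rw [← hprod]
  exact Complex.exp_ne_zero _
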